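/- arXiv:2405.06519 — 2 statements merged into one kernel-verified Lean document; each statement's English description precedes it below -/
import Mathlib

section
/- The map μ ↦ c_μ, where c_μ(K,v) = μ(Y(K,v)), is a vector space isomorphism from the space of real-valued charges (finitely additive set functions vanishing on ∅) on the ring R generated by the sets Y(K,v) onto the space J* of consistent maps from J to ℝ. -/
/-- Abstract axiomatization of the space `Y` of all places of `\overline{ℚ}`: a directed
system `F` of number fields (ordered by field extension `le`), the places `Pl K` of each
number field, the map `over` sending a place `w` of `L` to the place of `K` it divides, and
the basic compact open sets `Y(K,v) = {y ∈ Y : y ∣ v}` forming a basis of the totally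
disconnected Hausdorff topology on `Y`. -/
structure PlaceSystem where
  /-- the number fields -/
  F : Type
  /-- `le K L` means `L/K` is a (finite) field extension -/
  le : F → F → Prop
  le_refl : ∀ K, le K K
  /-- any two number fields admit a compositum -/
  directed : ∀ K L, ∃ M, le K M ∧ le L M
  /-- the places of a number field -/
  Pl : F → Type
  /-- `over h w` is the unique place of `K` divided by the place `w` of `L` -/
  over' : ∀ {K L : F}, le K L → Pl L → Pl K
  /-- only finitely many places of `L` divide a given place of `K` -/
  finiteFibers : ∀ {K L : F} (h : le K L) (v : Pl K), {w : Pl L | over' h w = v}.Finite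
  /-- the set of places of `\overline{ℚ}` -/
  Y : Type
  top : TopologicalSpace Y
  t2 : @T2Space Y top
  /-- the basic set `Y(K,v)` of places of `\overline{ℚ}` dividing `v` -/
  Yset : (K : F) → Pl K → Set Y
  Yset_nonempty : ∀ (K : F) (v : Pl K), (Yset K v).Nonempty
  Yset_compact : ∀ (K : F) (v : Pl K), @IsCompact Y top (Yset K v)
  Yset_open : ∀ (K : F) (v : Pl K), @IsOpen Y top (Yset K v)
  Yset_disjoint : ∀ (K : F) (v w : Pl K), v ≠ w → Disjoint (Yset K v) (Yset K w)
  /-- `Y(K,v)` is the disjoint union of the `Y(L,w)` over the places `w ∣ v` of `L` -/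
  Yset_decomp : ∀ {K L : F} (h : le K L) (v : Pl K),
    Yset K v = ⋃ w ∈ {w : Pl L | over' h w = v}, Yset L w
  basis : @TopologicalSpace.IsTopologicalBasis Y top
    {A : Set Y | ∃ (K : F) (v : Pl K), A = Yset K v}
  cover : (⋃ (K : F) (v : Pl K), Yset K v) = Set.univ
  noncompact : ¬ @IsCompact Y top Set.univ

/-- A map `c` on pairs `(K,v)` is consistent if `c(K,v) = Σ_{w ∣ v} c(L,w)` for every finite
extension `L/K`. -/
def PlaceSystem.Consistent (S : PlaceSystem) (c : ∀ K : S.F, S.Pl K → ℝ) : Prop :=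
  ∀ {K L : S.F} (h : S.le K L) (v : S.Pl K),
    c K v = ∑ᶠ (w : S.Pl L) (_ : S.over' h w = v), c L w

/-- `R`, the smallest ring of sets on `Y` containing all the basic sets `Y(K,v)`. -/
def PlaceSystem.ringR (S : PlaceSystem) : Set (Set S.Y) :=
  ⋂₀ {R : Set (Set S.Y) |
    MeasureTheory.IsSetRing R ∧ ∀ (K : S.F) (v : S.Pl K), S.Yset K v ∈ R}

/-- A charge on `R`: a finitely additive real-valued set function vanishing on `∅`. -/
def PlaceSystem.IsCharge (S : PlaceSystem) (μ : Set S.Y → ℝ) : Prop :=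
  μ ∅ = 0 ∧ ∀ A ∈ S.ringR, ∀ B ∈ S.ringR, Disjoint A B → μ (A ∪ B) = μ A + μ B

namespace PlaceSystemAux

open PlaceSystem

variable {S : PlaceSystem}

lemma nonempty_F (S : PlaceSystem) : Nonempty S.F := by
  have hY : Nonempty S.Y := by
    by_contra h
    rw [not_nonempty_iff] at h
    exact S.noncompact (by
      have : (Set.univ : Set S.Y) = ∅ := Set.univ_eq_empty_iff.mpr h
      rw [this]; exact @isCompact_empty _ S.top)
  obtain ⟨y⟩ := hY
  have : y ∈ ⋃ (K : S.F) (v : S.Pl K), S.Yset K v := S.cover ▸ Set.mem_univ y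
  obtain ⟨_, ⟨K, rfl⟩, -⟩ := this
  exact ⟨K⟩

/-- The finset of places of `L` lying over a place in `s`. -/
noncomputable def fiberFinset {K L : S.F} (h : S.le K L) (s : Finset (S.Pl K)) :
    Finset (S.Pl L) :=
  (Set.Finite.biUnion s.finite_toSet
    (fun v _ => S.finiteFibers h v)).toFinset

lemma mem_fiberFinset {K L : S.F} (h : S.le K L) (s : Finset (S.Pl K)) (w : S.Pl L) :
    w ∈ fiberFinset h s ↔ S.over' h w ∈ s := by
  simp only [fiberFinset, Set.Finite.mem_toFinset, Set.mem_iUnion, Set.mem_setOf_eq,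
    Finset.mem_coe, exists_prop]
  constructor
  · rintro ⟨v, hv, rfl⟩; exact hv
  · intro hw; exact ⟨_, hw, rfl⟩

lemma lift_eq {K L : S.F} (h : S.le K L) (s : Finset (S.Pl K)) :
    (⋃ v ∈ s, S.Yset K v) = ⋃ w ∈ fiberFinset h s, S.Yset L w := by
  ext y
  simp only [Set.mem_iUnion, mem_fiberFinset]
  constructor
  · rintro ⟨v, hv, hy⟩
    rw [S.Yset_decomp h v] at hy
    simp only [Set.mem_iUnion, Set.mem_setOf_eq] at hy
    obtain ⟨w, hw, hyw⟩ := hy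
    exact ⟨w, hw ▸ hv, hyw⟩
  · rintro ⟨w, hw, hy⟩
    refine ⟨S.over' h w, hw, ?_⟩
    rw [S.Yset_decomp h (S.over' h w)]
    simp only [Set.mem_iUnion, Set.mem_setOf_eq]
    exact ⟨w, rfl, hy⟩

lemma rep_subset {K : S.F} {s t : Finset (S.Pl K)}
    (hst : (⋃ v ∈ s, S.Yset K v) ⊆ ⋃ v ∈ t, S.Yset K v) : s ⊆ t := by
  intro v hv
  obtain ⟨y, hy⟩ := S.Yset_nonempty K v
  have : y ∈ ⋃ v ∈ t, S.Yset K v := hst (Set.mem_biUnion hv hy)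
  simp only [Set.mem_iUnion] at this
  obtain ⟨w, hw, hyw⟩ := this
  rcases eq_or_ne v w with rfl | hne
  · exact hw
  · exact absurd (S.Yset_disjoint K v w hne (Set.singleton_subset_iff.mpr hy)
      (Set.singleton_subset_iff.mpr hyw)) (by simp)

lemma rep_unique {K : S.F} {s t : Finset (S.Pl K)}
    (hst : (⋃ v ∈ s, S.Yset K v) = ⋃ v ∈ t, S.Yset K v) : s = t :=
  Finset.Subset.antisymm (rep_subset hst.le) (rep_subset hst.ge)

lemma mem_ringR_iff {A : Set S.Y} :
    A ∈ S.ringR ↔ ∃ (K : S.F) (s : Finset (S.Pl K)), A = ⋃ v ∈ s, S.Yset K v := by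
  classical
  constructor
  · intro hA
    refine hA {A | ∃ (K : S.F) (s : Finset (S.Pl K)), A = ⋃ v ∈ s, S.Yset K v}
      ⟨⟨?_, ?_, ?_⟩, ?_⟩
    · -- empty
      obtain ⟨K⟩ := nonempty_F S
      exact ⟨K, ∅, by simp⟩
    · -- union
      rintro A B ⟨K, s, rfl⟩ ⟨L, t, rfl⟩
      obtain ⟨M, hKM, hLM⟩ := S.directed K L
      refine ⟨M, fiberFinset hKM s ∪ fiberFinset hLM t, ?_⟩
      rw [lift_eq hKM s, lift_eq hLM t, Finset.set_biUnion_union]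
    · -- diff
      rintro A B ⟨K, s, rfl⟩ ⟨L, t, rfl⟩
      obtain ⟨M, hKM, hLM⟩ := S.directed K L
      refine ⟨M, fiberFinset hKM s \ fiberFinset hLM t, ?_⟩
      rw [lift_eq hKM s, lift_eq hLM t]
      ext y
      simp only [Set.mem_diff, Set.mem_iUnion, Finset.mem_sdiff, not_exists]
      constructor
      · rintro ⟨⟨v, hv, hy⟩, hB⟩
        refine ⟨v, ⟨hv, ?_⟩, hy⟩
        intro hvt
        exact (hB v hvt) hy
      · rintro ⟨v, ⟨hv, hvt⟩, hy⟩
        refine ⟨⟨v, hv, hy⟩, ?_⟩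
        intro w hw hyw
        rcases eq_or_ne v w with rfl | hne
        · exact hvt hw
        · exact absurd (S.Yset_disjoint M v w hne (Set.singleton_subset_iff.mpr hy)
            (Set.singleton_subset_iff.mpr hyw)) (by simp)
    · intro K v
      exact ⟨K, {v}, by simp⟩
  · rintro ⟨K, s, rfl⟩
    intro R hR
    obtain ⟨hring, hbasic⟩ := hR
    induction s using Finset.induction_on with
    | empty => simpa using hring.empty_mem
    | insert _ _ ha ih =>
      rw [Finset.set_biUnion_insert]
      exact hring.union_mem (hbasic _ _) ih

lemma finsum_fiber_eq {K L : S.F} (h : S.le K L) (v : S.Pl K) (f : S.Pl L → ℝ) :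
    (∑ᶠ (w : S.Pl L) (_ : S.over' h w = v), f w) = ∑ w ∈ fiberFinset h {v}, f w := by
  have hset : {w : S.Pl L | S.over' h w = v} = ↑(fiberFinset h ({v} : Finset (S.Pl K))) := by
    ext w; simp [mem_fiberFinset]
  calc (∑ᶠ (w : S.Pl L) (_ : S.over' h w = v), f w)
      = ∑ᶠ (w : S.Pl L) (_ : w ∈ (↑(fiberFinset h ({v} : Finset (S.Pl K))) : Set (S.Pl L))), f w := by
        rw [← hset]; rfl
    _ = ∑ w ∈ fiberFinset h {v}, f w := finsum_mem_coe_finset _ _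

lemma sum_lift {c : ∀ K : S.F, S.Pl K → ℝ} (hc : S.Consistent c) {K M : S.F}
    (h : S.le K M) (s : Finset (S.Pl K)) :
    ∑ v ∈ s, c K v = ∑ w ∈ fiberFinset h s, c M w := by
  classical
  have hbi : fiberFinset h s = s.biUnion (fun v => fiberFinset h {v}) := by
    ext w; simp [mem_fiberFinset]
  rw [hbi, Finset.sum_biUnion]
  · refine Finset.sum_congr rfl fun v hv => ?_
    rw [← finsum_fiber_eq h v (c M)]
    exact hc h v
  · intro v hv w hw hvw
    simp only [Function.onFun]
    rw [Finset.disjoint_left]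
    intro t ht ht'
    rw [mem_fiberFinset, Finset.mem_singleton] at ht ht'
    exact hvw (ht.symm.trans ht')

open Classical in
/-- The charge associated to a consistent map. -/
noncomputable def chargeOf (S : PlaceSystem) (c : ∀ K : S.F, S.Pl K → ℝ) : Set S.Y → ℝ :=
  fun A =>
    if h : ∃ (K : S.F) (s : Finset (S.Pl K)), A = ⋃ v ∈ s, S.Yset K v
    then ∑ v ∈ h.choose_spec.choose, c h.choose v
    else 0

lemma chargeOf_eq {c : ∀ K : S.F, S.Pl K → ℝ} (hc : S.Consistent c) {A : Set S.Y}
    {K : S.F} {s : Finset (S.Pl K)} (hA : A = ⋃ v ∈ s, S.Yset K v) :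
    chargeOf S c A = ∑ v ∈ s, c K v := by
  have hex : ∃ (K : S.F) (s : Finset (S.Pl K)), A = ⋃ v ∈ s, S.Yset K v := ⟨K, s, hA⟩
  rw [chargeOf, dif_pos hex]
  set K₀ := hex.choose
  set s₀ := hex.choose_spec.choose
  have hA₀ : A = ⋃ v ∈ s₀, S.Yset K₀ v := hex.choose_spec.choose_spec
  obtain ⟨M, h₀, h₁⟩ := S.directed K₀ K
  have he : fiberFinset h₀ s₀ = fiberFinset h₁ s := by
    apply rep_unique (K := M)
    rw [← lift_eq h₀ s₀, ← lift_eq h₁ s, ← hA₀, ← hA]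
  rw [sum_lift hc h₀ s₀, sum_lift hc h₁ s, he]

lemma charge_sum {μ : Set S.Y → ℝ} (hμ : S.IsCharge μ) (K : S.F) (s : Finset (S.Pl K)) :
    μ (⋃ v ∈ s, S.Yset K v) = ∑ v ∈ s, μ (S.Yset K v) := by
  classical
  induction s using Finset.induction_on with
  | empty => simpa using hμ.1
  | @insert a s ha ih =>
    rw [Finset.set_biUnion_insert, Finset.sum_insert ha, ← ih]
    refine hμ.2 _ (mem_ringR_iff.mpr ⟨K, {a}, by simp⟩) _
      (mem_ringR_iff.mpr ⟨K, s, rfl⟩) ?_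
    rw [Set.disjoint_left]
    intro y hy hy'
    simp only [Set.mem_iUnion] at hy'
    obtain ⟨w, hw, hyw⟩ := hy'
    have hne : a ≠ w := fun h => ha (h ▸ hw)
    exact absurd (S.Yset_disjoint K a w hne (Set.singleton_subset_iff.mpr hy)
      (Set.singleton_subset_iff.mpr hyw)) (by simp)

lemma chargeOf_isCharge {c : ∀ K : S.F, S.Pl K → ℝ} (hc : S.Consistent c) :
    S.IsCharge (chargeOf S c) := by
  constructor
  · obtain ⟨K⟩ := nonempty_F S
    rw [chargeOf_eq hc (A := ∅) (K := K) (s := ∅) (by simp)]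
    simp
  · intro A hA B hB hAB
    classical
    obtain ⟨K, s, rfl⟩ := mem_ringR_iff.mp hA
    obtain ⟨L, t, rfl⟩ := mem_ringR_iff.mp hB
    obtain ⟨M, hKM, hLM⟩ := S.directed K L
    rw [chargeOf_eq hc (lift_eq hKM s), chargeOf_eq hc (lift_eq hLM t),
      chargeOf_eq hc (A := (⋃ v ∈ s, S.Yset K v) ∪ ⋃ v ∈ t, S.Yset L v)
        (s := fiberFinset hKM s ∪ fiberFinset hLM t)
        (by rw [lift_eq hKM s, lift_eq hLM t, Finset.set_biUnion_union])]
    rw [Finset.sum_union]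
    rw [Finset.disjoint_left]
    intro w hw hw'
    obtain ⟨y, hy⟩ := S.Yset_nonempty M w
    have h1 : y ∈ ⋃ v ∈ s, S.Yset K v := by
      rw [lift_eq hKM s]; exact Set.mem_biUnion hw hy
    have h2 : y ∈ ⋃ v ∈ t, S.Yset L v := by
      rw [lift_eq hLM t]; exact Set.mem_biUnion hw' hy
    exact Set.disjoint_left.mp hAB h1 h2

lemma chargeOf_consistent_val {c : ∀ K : S.F, S.Pl K → ℝ} (hc : S.Consistent c)
    (K : S.F) (v : S.Pl K) : chargeOf S c (S.Yset K v) = c K v := by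
  rw [chargeOf_eq hc (A := S.Yset K v) (K := K) (s := {v}) (by simp)]
  simp

end PlaceSystemAux

open PlaceSystemAux

/-- The map `μ ↦ c_μ`, `c_μ(K,v) = μ(Y(K,v))`, is a vector space isomorphism from the space
of charges on the ring `R` generated by the `Y(K,v)` (normalized to vanish off `R`) onto the
space `J*` of consistent maps: it is bijective and respects addition and scalar
multiplication. -/
theorem stmt_7 (S : PlaceSystem) :
    ∃ φ : {μ : Set S.Y → ℝ // S.IsCharge μ ∧ ∀ A ∉ S.ringR, μ A = 0} →
        {c : ∀ K : S.F, S.Pl K → ℝ // S.Consistent c},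
      (∀ μ (K : S.F) (v : S.Pl K), (φ μ).1 K v = μ.1 (S.Yset K v)) ∧
      Function.Bijective φ ∧
      (∀ μ ν ρ : {μ : Set S.Y → ℝ // S.IsCharge μ ∧ ∀ A ∉ S.ringR, μ A = 0},
        (∀ A, ρ.1 A = μ.1 A + ν.1 A) →
        ∀ (K : S.F) (v : S.Pl K), (φ ρ).1 K v = (φ μ).1 K v + (φ ν).1 K v) ∧
      (∀ (r : ℝ) (μ ρ : {μ : Set S.Y → ℝ // S.IsCharge μ ∧ ∀ A ∉ S.ringR, μ A = 0}),
        (∀ A, ρ.1 A = r * μ.1 A) →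
        ∀ (K : S.F) (v : S.Pl K), (φ ρ).1 K v = r * (φ μ).1 K v) := by
  refine ⟨fun μ => ⟨fun K v => μ.1 (S.Yset K v), ?_⟩, fun μ K v => rfl, ⟨?_, ?_⟩, ?_, ?_⟩
  · -- consistency
    intro K L h v
    rw [finsum_fiber_eq h v, ← charge_sum μ.2.1 L (fiberFinset h ({v} : Finset (S.Pl K))),
      ← lift_eq h ({v} : Finset (S.Pl K))]
    simp
  · -- injective
    intro μ ν h
    have hval : ∀ (K : S.F) (v : S.Pl K), μ.1 (S.Yset K v) = ν.1 (S.Yset K v) := by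
      intro K v
      exact congrFun (congrFun (congrArg Subtype.val h) K) v
    ext A
    by_cases hA : A ∈ S.ringR
    · obtain ⟨K, s, rfl⟩ := mem_ringR_iff.mp hA
      rw [charge_sum μ.2.1, charge_sum ν.2.1]
      exact Finset.sum_congr rfl fun v _ => hval K v
    · rw [μ.2.2 A hA, ν.2.2 A hA]
  · -- surjective
    rintro ⟨c, hc⟩
    refine ⟨⟨chargeOf S c, chargeOf_isCharge hc, fun A hA => ?_⟩, ?_⟩
    · rw [chargeOf, dif_neg]
      intro hex
      exact hA (mem_ringR_iff.mpr hex)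
    · ext K v
      exact chargeOf_consistent_val hc K v
  · intro μ ν ρ h K v
    exact h (S.Yset K v)
  · intro r μ ρ h K v
    exact h (S.Yset K v)
end

section
/- Define c(K,v) = (-1)^n [K_v : ℚ_{p_n}]/[K : ℚ] for v dividing the n-th rational place p_n (with p_1, p_2, ... enumerating the primes together with ∞). Then c is a consistent map, but the sum Σ_{n=1}^∞ c(ℚ, p_n) = Σ_{n=1}^∞ (-1)^n does not converge unconditionally in [-∞,∞]; hence c is not globally consistent. -/
open scoped Classical

/-- Unconditional convergence of the finite-part sum: the terms equal to `±∞` are discarded,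
and every enumeration of the remaining real terms has partial sums tending to `L`. -/
noncomputable def UncondRealPart (x : ℕ → EReal) (L : EReal) : Prop :=
  ∀ σ : Equiv.Perm ℕ,
    Filter.Tendsto
      (fun n : ℕ => ((∑ k ∈ Finset.range n,
        if x (σ k) = ⊤ ∨ x (σ k) = ⊥ then (0 : ℝ) else (x (σ k)).toReal : ℝ) : EReal))
      Filter.atTop (nhds L)

/-- Unconditional convergence in `[-∞,∞]` of `Σ_i x i` to `L`, following cases (U1)-(U3). -/
noncomputable def UncondSumE (x : ℕ → EReal) (L : EReal) : Prop :=
  ((∀ i, x i ≠ ⊤) ∧ (∀ i, x i ≠ ⊥) ∧ UncondRealPart x L) ∨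
  ((∃ i, x i = ⊤) ∧ (∀ i, x i ≠ ⊥) ∧ L = ⊤ ∧ ∃ M : EReal, M ≠ ⊥ ∧ UncondRealPart x M) ∨
  ((∃ i, x i = ⊥) ∧ (∀ i, x i ≠ ⊤) ∧ L = ⊥ ∧ ∃ M : EReal, M ≠ ⊤ ∧ UncondRealPart x M)

/-- The basic set attached to an entry of a (padded) basis partition. -/
def partSet (S : PlaceSystem) (o : Option ((K : S.F) × S.Pl K)) : Set S.Y :=
  match o with
  | none => ∅
  | some p => S.Yset p.1 p.2

/-- The value of `c` attached to an entry of a (padded) basis partition. -/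
noncomputable def partVal (S : PlaceSystem) (c : ∀ K : S.F, S.Pl K → ℝ)
    (o : Option ((K : S.F) × S.Pl K)) : EReal :=
  match o with
  | none => 0
  | some p => ((c p.1 p.2 : ℝ) : EReal)

/-- `c` is globally consistent: for every partition of `Y` by pairwise disjoint basic sets
`Y(K,v)` (padded with `∅`), the sum of the values of `c` converges unconditionally in
`[-∞,∞]`. -/
noncomputable def PlaceSystem.GloballyConsistent (S : PlaceSystem)
    (c : ∀ K : S.F, S.Pl K → ℝ) : Prop :=
  ∀ Γ : ℕ → Option ((K : S.F) × S.Pl K),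
    Pairwise (Function.onFun Disjoint fun i => partSet S (Γ i)) →
    (⋃ i, partSet S (Γ i)) = Set.univ →
    ∃ L : EReal, UncondSumE (fun i => partVal S c (Γ i)) L

/-- Let `Q ∈ F` represent `ℚ` (so `deg Q = 1` and all its local degrees are `1`), let
`e : ℕ ≃ Pl Q` enumerate the rational places `p_1, p_2, …` (primes together with `∞`), and
define `c(K,v) = (-1)^n [K_v : ℚ_{p_n}]/[K : ℚ]` for `v` dividing the `n`-th rational place.
Then `c` is a consistent map, but `Σ_n c(ℚ, p_n) = Σ_n (-1)^n` converges unconditionally to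
no value of `[-∞,∞]`; hence `c` is not globally consistent. -/
theorem stmt_15 (S : PlaceSystem)
    (deg : S.F → ℕ) (hdegpos : ∀ K, 0 < deg K)
    (d : ∀ K : S.F, S.Pl K → ℕ)
    (ld : ∀ {K L : S.F}, S.le K L → S.Pl L → ℕ)
    (htower : ∀ {K L : S.F} (h : S.le K L) (w : S.Pl L),
      d L w = ld h w * d K (S.over' h w))
    (hdvd : ∀ {K L : S.F}, S.le K L → deg K ∣ deg L)
    (hdegformula : ∀ {K L : S.F} (h : S.le K L) (v : S.Pl K),
      ∑ᶠ (w : S.Pl L) (_ : S.over' h w = v), ld h w = deg L / deg K)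
    (Q : S.F) (bot : ∀ K, S.le Q K)
    (hcomp : ∀ {K L : S.F} (h : S.le K L) (w : S.Pl L),
      S.over' (bot L) w = S.over' (bot K) (S.over' h w))
    (hQdeg : deg Q = 1) (hQd : ∀ v : S.Pl Q, d Q v = 1)
    (e : ℕ ≃ S.Pl Q)
    (c : ∀ K : S.F, S.Pl K → ℝ)
    (hc : ∀ (K : S.F) (v : S.Pl K) (n : ℕ), S.over' (bot K) v = e n →
      c K v = (-1 : ℝ) ^ (n + 1) * (d K v : ℝ) / (deg K : ℝ)) :
    S.Consistent c ∧
    (∀ L : EReal, ¬ UncondSumE (fun n => ((c Q (e n) : ℝ) : EReal)) L) ∧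
    ¬ S.GloballyConsistent c := by
  classical
  -- `over (bot Q)` is the identity on places of `Q`
  have hidQ : ∀ w : S.Pl Q, S.over' (bot Q) w = w := by
    intro w
    by_contra hne
    have hsub : S.Yset Q w ⊆ S.Yset Q (S.over' (bot Q) w) := by
      rw [S.Yset_decomp (bot Q) (S.over' (bot Q) w)]
      exact Set.subset_biUnion_of_mem (u := fun w => S.Yset Q w) rfl
    have hdis := S.Yset_disjoint Q w (S.over' (bot Q) w) (fun h => hne h.symm)
    have := hdis.eq_bot_of_le hsub
    exact (S.Yset_nonempty Q w).ne_empty this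
  -- value of `c` at rational places
  have hcQ : ∀ n : ℕ, c Q (e n) = (-1 : ℝ) ^ (n + 1) := by
    intro n
    rw [hc Q (e n) n (hidQ (e n)), hQd, hQdeg]
    norm_num
  -- consistency
  have hcons : S.Consistent c := by
    intro K L h v
    obtain ⟨n, hn⟩ : ∃ n, S.over' (bot K) v = e n :=
      ⟨e.symm (S.over' (bot K) v), (e.apply_symm_apply _).symm⟩
    have hfib := S.finiteFibers h v
    have hmem : ∀ {x : S.Pl L}, c L x ≠ 0 → (S.over' h x = v ↔ x ∈ hfib.toFinset) := by
      intro x _; simp [Set.Finite.mem_toFinset]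
    rw [finsum_cond_eq_sum_of_cond_iff _ hmem]
    have hmem2 : ∀ {x : S.Pl L}, (ld h x ≠ 0) → (S.over' h x = v ↔ x ∈ hfib.toFinset) := by
      intro x _; simp [Set.Finite.mem_toFinset]
    have hKne : (deg K : ℝ) ≠ 0 := Nat.cast_ne_zero.mpr (hdegpos K).ne'
    have hLne : (deg L : ℝ) ≠ 0 := Nat.cast_ne_zero.mpr (hdegpos L).ne'
    have hsumld : ∑ w ∈ hfib.toFinset, (ld h w : ℝ) = (deg L : ℝ) / (deg K : ℝ) := by
      rw [← Nat.cast_sum, ← finsum_cond_eq_sum_of_cond_iff _ hmem2, hdegformula h v,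
        Nat.cast_div (hdvd h) hKne]
    have key : ∀ w ∈ hfib.toFinset,
        c L w = (ld h w : ℝ) * ((-1 : ℝ) ^ (n + 1) * (d K v : ℝ) / (deg L : ℝ)) := by
      intro w hw
      have hwv : S.over' h w = v := by simpa [Set.Finite.mem_toFinset] using hw
      have hwn : S.over' (bot L) w = e n := by rw [hcomp h w, hwv, hn]
      rw [hc L w n hwn, htower h w, hwv]
      push_cast
      ring
    rw [Finset.sum_congr rfl key, ← Finset.sum_mul, hsumld, hc K v n hn]
    field_simp
  -- the alternating partial sums
  have hsum0 : ∀ m : ℕ, ∑ k ∈ Finset.range (2 * m), ((-1 : ℝ) ^ (k + 1)) = 0 := by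
    intro m
    induction m with
    | zero => simp
    | succ m ih =>
      rw [show 2 * (m + 1) = 2 * m + 1 + 1 by ring, Finset.sum_range_succ,
        Finset.sum_range_succ, ih]
      have h1 : ((-1 : ℝ)) ^ (2 * m + 1) = -1 := Odd.neg_one_pow ⟨m, by ring⟩
      have h2 : ((-1 : ℝ)) ^ (2 * m + 1 + 1) = 1 := Even.neg_one_pow ⟨m + 1, by ring⟩
      rw [h1, h2]; ring
  have hsum1 : ∀ m : ℕ, ∑ k ∈ Finset.range (2 * m + 1), ((-1 : ℝ) ^ (k + 1)) = -1 := by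
    intro m
    rw [Finset.sum_range_succ, hsum0]
    have h1 : ((-1 : ℝ)) ^ (2 * m + 1) = -1 := Odd.neg_one_pow ⟨m, by ring⟩
    rw [h1]; ring
  -- non-convergence of the alternating sum
  have hnc : ∀ L : EReal, ¬ UncondSumE (fun n => ((c Q (e n) : ℝ) : EReal)) L := by
    intro L hL
    have hurp : UncondRealPart (fun n => ((c Q (e n) : ℝ) : EReal)) L := by
      rcases hL with ⟨_, _, h⟩ | ⟨⟨i, hi⟩, _⟩ | ⟨⟨i, hi⟩, _⟩
      · exact h
      · exact absurd hi (EReal.coe_ne_top _)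
      · exact absurd hi (EReal.coe_ne_bot _)
    have h1 := hurp (Equiv.refl ℕ)
    have h1' : Filter.Tendsto
        (fun n : ℕ => ((∑ k ∈ Finset.range n, ((-1 : ℝ) ^ (k + 1)) : ℝ) : EReal))
        Filter.atTop (nhds L) := by
      have hfun : (fun n : ℕ => ((∑ k ∈ Finset.range n,
          (if ((c Q (e ((Equiv.refl ℕ) k)) : ℝ) : EReal) = ⊤ ∨
              ((c Q (e ((Equiv.refl ℕ) k)) : ℝ) : EReal) = ⊥ then (0 : ℝ)
            else (((c Q (e ((Equiv.refl ℕ) k)) : ℝ) : EReal)).toReal) : ℝ) : EReal)) =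
          (fun n : ℕ => ((∑ k ∈ Finset.range n, ((-1 : ℝ) ^ (k + 1)) : ℝ) : EReal)) := by
        funext n
        congr 1
        refine Finset.sum_congr rfl fun k _ => ?_
        simp only [Equiv.refl_apply, EReal.coe_ne_top, EReal.coe_ne_bot, or_self, if_false,
          EReal.toReal_coe]
        exact hcQ k
      rw [← hfun]
      exact h1
    have heven : Filter.Tendsto (fun m : ℕ => 2 * m) Filter.atTop Filter.atTop :=
      Filter.tendsto_atTop_atTop.mpr fun b => ⟨b, fun n hn => by omega⟩
    have hodd : Filter.Tendsto (fun m : ℕ => 2 * m + 1) Filter.atTop Filter.atTop :=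
      Filter.tendsto_atTop_atTop.mpr fun b => ⟨b, fun n hn => by omega⟩
    have h2 : Filter.Tendsto (fun _ : ℕ => ((0 : ℝ) : EReal)) Filter.atTop (nhds L) := by
      have := h1'.comp heven
      simpa only [Function.comp_def, hsum0] using this
    have h3 : Filter.Tendsto (fun _ : ℕ => ((-1 : ℝ) : EReal)) Filter.atTop (nhds L) := by
      have := h1'.comp hodd
      simpa only [Function.comp_def, hsum1] using this
    have hL0' : ((0 : ℝ) : EReal) = L := tendsto_nhds_unique tendsto_const_nhds h2
    have hL1' : ((-1 : ℝ) : EReal) = L := tendsto_nhds_unique tendsto_const_nhds h3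
    have : ((0 : ℝ) : EReal) = ((-1 : ℝ) : EReal) := hL0'.trans hL1'.symm
    have : (0 : ℝ) = -1 := EReal.coe_injective this
    norm_num at this
  refine ⟨hcons, hnc, ?_⟩
  intro hg
  obtain ⟨L, hL⟩ := hg (fun n => some ⟨Q, e n⟩)
    (by
      intro i j hij
      have : e i ≠ e j := fun h => hij (e.injective h)
      simpa [Function.onFun, partSet] using S.Yset_disjoint Q (e i) (e j) this)
    (by
      apply Set.eq_univ_of_univ_subset
      rw [← S.cover]
      refine Set.iUnion_subset fun K => Set.iUnion_subset fun v => ?_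
      have hsub : S.Yset K v ⊆ S.Yset Q (S.over' (bot K) v) := by
        rw [S.Yset_decomp (bot K) (S.over' (bot K) v)]
        exact Set.subset_biUnion_of_mem (u := fun w => S.Yset K w) rfl
      refine hsub.trans ?_
      have hsub2 := Set.subset_iUnion
        (fun i : ℕ => partSet S (some ⟨Q, e i⟩)) (e.symm (S.over' (bot K) v))
      simpa [partSet] using hsub2)
  exact hnc L (by simpa [partVal] using hL)
end
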